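/- Let λ be a real with 0 < λ < 1. Then the function f(x) := x / (1 - λ^x) is strictly monotone increasing on the interval (0, 1]. -/

import Mathlib

open Real

theorem stmt_17 (lam : ℝ) (hlam0 : 0 < lam) (hlam1 : lam < 1) :
    StrictMonoOn (fun x : ℝ => x / (1 - lam ^ x)) (Set.Ioc 0 1) := by
  have hc : Real.log lam < 0 := Real.log_neg hlam0 hlam1
  set c := Real.log lam with hcdef
  have hrw : (fun x : ℝ => x / (1 - lam ^ x)) =
      fun x : ℝ => x / (1 - Real.exp (c * x)) := by
    funext x
    rw [Real.rpow_def_of_pos hlam0]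
  rw [hrw]
  -- denominator positive on x > 0
  have hden : ∀ x : ℝ, 0 < x → 0 < 1 - Real.exp (c * x) := by
    intro x hx
    have : Real.exp (c * x) < 1 := by
      rw [Real.exp_lt_one_iff]
      exact mul_neg_of_neg_of_pos hc hx
    linarith
  apply strictMonoOn_of_deriv_pos (convex_Ioc 0 1)
  · apply ContinuousOn.div
    · exact continuous_id.continuousOn
    · exact (continuous_const.sub
        (Real.continuous_exp.comp (continuous_const.mul continuous_id))).continuousOn
    · intro x hx
      exact ne_of_gt (hden x hx.1)
  · intro x hx
    rw [interior_Ioc] at hx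
    have hx0 : 0 < x := hx.1
    have hd := hden x hx0
    have hder : HasDerivAt (fun x : ℝ => x / (1 - Real.exp (c * x)))
        ((1 * (1 - Real.exp (c * x)) - x * (0 - c * Real.exp (c * x))) /
          (1 - Real.exp (c * x)) ^ 2) x := by
      have h1 : HasDerivAt (fun x : ℝ => x) 1 x := hasDerivAt_id x
      have h2 : HasDerivAt (fun x : ℝ => 1 - Real.exp (c * x))
          (0 - c * Real.exp (c * x)) x := by
        have he : HasDerivAt (fun x : ℝ => Real.exp (c * x)) (c * Real.exp (c * x)) x := by
          have hm : HasDerivAt (fun x : ℝ => c * x) c x := by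
            simpa using (hasDerivAt_id x).const_mul c
          simpa [mul_comm] using hm.exp
        simpa using he.const_sub (1 : ℝ)
      exact h1.div h2 (ne_of_gt hd)
    rw [hder.deriv]
    apply div_pos
    · -- numerator: 1 - exp(cx) + x*c*exp(cx) > 0
      have hu : 0 < -(c * x) := by nlinarith
      have hkey : -(c * x) + 1 < Real.exp (-(c * x)) := Real.add_one_lt_exp (ne_of_gt hu)
      have hmul : Real.exp (c * x) * Real.exp (-(c * x)) = 1 := by
        rw [← Real.exp_add]; simp
      have hep : 0 < Real.exp (c * x) := Real.exp_pos _
      nlinarith [Real.exp_pos (-(c * x))]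
    · positivity
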